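/- Fix β > 0 and x,y ∈ (0,1). Then ∂²h_β(x,y)/∂x∂y = (β/2)·sinh(β/2) / (e^{β/4}·cosh(β(x-y)/2) - e^{-β/4}·cosh(β(x+y-1)/2))². -/

import Mathlib

/-- The limiting height profile `h_β(x,y)` of the Mallows measure. -/
noncomputable def hFn (β x y : ℝ) : ℝ :=
  (1 / β) * (Real.log (1 - Real.exp (-β)) -
    Real.log (Real.exp (-β * x) + Real.exp (-β * y) - Real.exp (-β * (x + y)) - Real.exp (-β)))

/-- The denominator inside the logarithm. -/
noncomputable def Dfn (β x y : ℝ) : ℝ :=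
  Real.exp (-β * x) + Real.exp (-β * y) - Real.exp (-β * (x + y)) - Real.exp (-β)

lemma Dpos {β x y : ℝ} (hβ : 0 < β) (hx : 0 < x) (hy : y ∈ Set.Ioo (0:ℝ) 1) :
    0 < Dfn β x y := by
  have e1 : Real.exp (-β * (x + y)) = Real.exp (-β * x) * Real.exp (-β * y) := by
    rw [← Real.exp_add]; ring_nf
  have h1 : Real.exp (-β * x) < 1 := Real.exp_lt_one_iff.2 (by nlinarith)
  have h2 : Real.exp (-β * y) < 1 := Real.exp_lt_one_iff.2 (by nlinarith [hy.1])
  have h3 : Real.exp (-β) < Real.exp (-β * y) := Real.exp_lt_exp.2 (by nlinarith [hy.2])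
  have h4 := Real.exp_pos (-β * x)
  unfold Dfn
  nlinarith

lemma deriv_inner {β x' y : ℝ} (hβ : 0 < β) (hx' : 0 < x') (hy : y ∈ Set.Ioo (0:ℝ) 1) :
    deriv (fun y' => hFn β x' y') y
      = Real.exp (-β * y) * (1 - Real.exp (-β * x')) / Dfn β x' y := by
  have hD := Dpos hβ hx' hy
  have hDne : Dfn β x' y ≠ 0 := ne_of_gt hD
  have hE1 : HasDerivAt (fun y' : ℝ => Real.exp (-β * y')) (Real.exp (-β * y) * (-β)) y := by
    have : HasDerivAt (fun y' : ℝ => -β * y') (-β) y := by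
      simpa using (hasDerivAt_id y).const_mul (-β)
    exact this.exp
  have hE2 : HasDerivAt (fun y' : ℝ => Real.exp (-β * (x' + y')))
      (Real.exp (-β * (x' + y)) * (-β)) y := by
    have : HasDerivAt (fun y' : ℝ => -β * (x' + y')) (-β) y := by
      simpa using ((hasDerivAt_id y).const_add x').const_mul (-β)
    exact this.exp
  have hDy : HasDerivAt (fun y' => Dfn β x' y')
      (Real.exp (-β * y) * (-β) - Real.exp (-β * (x' + y)) * (-β)) y := by
    simpa [Dfn] using
      ((((hasDerivAt_const y (Real.exp (-β * x'))).fun_add hE1).fun_sub hE2).fun_sub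
        (hasDerivAt_const y (Real.exp (-β))))
  have hL : HasDerivAt (fun y' => hFn β x' y')
      ((1 / β) * (0 - (Real.exp (-β * y) * (-β) - Real.exp (-β * (x' + y)) * (-β)) / Dfn β x' y))
      y := by
    have := ((hasDerivAt_const y (Real.log (1 - Real.exp (-β)))).sub
      (hDy.log hDne)).const_mul (1 / β)
    simpa [hFn, Dfn, mul_comm, sub_eq_add_neg] using this
  rw [hL.deriv]
  have e1 : Real.exp (-β * (x' + y)) = Real.exp (-β * x') * Real.exp (-β * y) := by
    rw [← Real.exp_add]; ring_nf
  rw [e1]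
  field_simp
  ring

lemma alg_key (β x y : ℝ) :
    Real.exp (β / 4) * Real.cosh (β * (x - y) / 2)
      - Real.exp (-β / 4) * Real.cosh (β * (x + y - 1) / 2)
    = Real.exp (β / 4) * Real.exp (β * (x + y) / 2) *
        (Real.exp (-β * x) + Real.exp (-β * y) - Real.exp (-β * (x + y)) - Real.exp (-β)) / 2 := by
  have pa := Real.exp_pos (β * x / 2)
  have pb := Real.exp_pos (β * y / 2)
  have pc := Real.exp_pos (β / 4)
  set a := Real.exp (β * x / 2) with ha
  set b := Real.exp (β * y / 2) with hb
  set c := Real.exp (β / 4) with hc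
  have e1 : Real.exp (β * (x - y) / 2) = a / b := by
    rw [ha, hb, ← Real.exp_sub]; ring_nf
  have e2 : Real.exp (-(β * (x - y) / 2)) = b / a := by
    rw [ha, hb, ← Real.exp_sub]; ring_nf
  have e3 : Real.exp (β * (x + y - 1) / 2) = a * b / (c * c) := by
    rw [ha, hb, hc, ← Real.exp_add, ← Real.exp_add, ← Real.exp_sub]; ring_nf
  have e4 : Real.exp (-(β * (x + y - 1) / 2)) = c * c / (a * b) := by
    rw [ha, hb, hc, ← Real.exp_add, ← Real.exp_add, ← Real.exp_sub]; ring_nf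
  have e5 : Real.exp (-β / 4) = c⁻¹ := by
    rw [hc, ← Real.exp_neg]; ring_nf
  have e6 : Real.exp (-β * x) = (a * a)⁻¹ := by
    rw [ha, ← Real.exp_add, ← Real.exp_neg]; ring_nf
  have e7 : Real.exp (-β * y) = (b * b)⁻¹ := by
    rw [hb, ← Real.exp_add, ← Real.exp_neg]; ring_nf
  have e8 : Real.exp (-β * (x + y)) = (a * a * (b * b))⁻¹ := by
    rw [ha, hb, ← Real.exp_add, ← Real.exp_add, ← Real.exp_add, ← Real.exp_neg]; ring_nf
  have e9 : Real.exp (-β) = (c * c * (c * c))⁻¹ := by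
    rw [hc, ← Real.exp_add, ← Real.exp_add, ← Real.exp_neg]; ring_nf
  have e10 : Real.exp (β * (x + y) / 2) = a * b := by
    rw [ha, hb, ← Real.exp_add]; ring_nf
  rw [Real.cosh_eq, Real.cosh_eq, e1, e2, e3, e4, e5, e6, e7, e8, e9, e10]
  field_simp
  ring

/-- The mixed partial derivative of `h_β` recovers the Mallows permuton density:
`∂²h_β/∂x∂y = (β/2)sinh(β/2) / (e^{β/4}cosh(β(x-y)/2) - e^{-β/4}cosh(β(x+y-1)/2))²`. -/
theorem hFn_mixed_partial (β x y : ℝ) (hβ : 0 < β)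
    (hx : x ∈ Set.Ioo (0:ℝ) 1) (hy : y ∈ Set.Ioo (0:ℝ) 1) :
    deriv (fun x' => deriv (fun y' => hFn β x' y') y) x
      = (β / 2 * Real.sinh (β / 2)) /
        (Real.exp (β / 4) * Real.cosh (β * (x - y) / 2)
          - Real.exp (-β / 4) * Real.cosh (β * (x + y - 1) / 2)) ^ 2 := by
  have hD := Dpos hβ hx.1 hy
  have hDne : Dfn β x y ≠ 0 := ne_of_gt hD
  have hev : (fun x' => deriv (fun y' => hFn β x' y') y)
      =ᶠ[nhds x] (fun x' => Real.exp (-β * y) * (1 - Real.exp (-β * x')) / Dfn β x' y) := by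
    filter_upwards [eventually_gt_nhds hx.1] with x' hx'
    exact deriv_inner hβ hx' hy
  rw [hev.deriv_eq]
  have hEx : HasDerivAt (fun x' : ℝ => Real.exp (-β * x')) (Real.exp (-β * x) * (-β)) x := by
    have : HasDerivAt (fun x' : ℝ => -β * x') (-β) x := by
      simpa using (hasDerivAt_id x).const_mul (-β)
    exact this.exp
  have hE2 : HasDerivAt (fun x' : ℝ => Real.exp (-β * (x' + y)))
      (Real.exp (-β * (x + y)) * (-β)) x := by
    have : HasDerivAt (fun x' : ℝ => -β * (x' + y)) (-β) x := by
      simpa using ((hasDerivAt_id x).add_const y).const_mul (-β)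
    exact this.exp
  have hN : HasDerivAt (fun x' => Real.exp (-β * y) * (1 - Real.exp (-β * x')))
      (Real.exp (-β * y) * (0 - Real.exp (-β * x) * (-β))) x := by
    simpa using ((hasDerivAt_const x (1:ℝ)).sub hEx).const_mul (Real.exp (-β * y))
  have hDx : HasDerivAt (fun x' => Dfn β x' y)
      (Real.exp (-β * x) * (-β) - Real.exp (-β * (x + y)) * (-β)) x := by
    simpa [Dfn] using
      (((hEx.fun_add (hasDerivAt_const x (Real.exp (-β * y)))).fun_sub hE2).fun_sub
        (hasDerivAt_const x (Real.exp (-β))))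
  have hdiv := hN.fun_div hDx hDne
  rw [hdiv.deriv, alg_key β x y, Real.sinh_eq]
  -- now pure algebra in a = e^{βx/2}, b = e^{βy/2}, c = e^{β/4}
  have pa := Real.exp_pos (β * x / 2)
  have pb := Real.exp_pos (β * y / 2)
  have pc := Real.exp_pos (β / 4)
  set a := Real.exp (β * x / 2) with ha
  set b := Real.exp (β * y / 2) with hb
  set c := Real.exp (β / 4) with hc
  have e6 : Real.exp (-β * x) = (a * a)⁻¹ := by
    rw [ha, ← Real.exp_add, ← Real.exp_neg]; ring_nf
  have e7 : Real.exp (-β * y) = (b * b)⁻¹ := by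
    rw [hb, ← Real.exp_add, ← Real.exp_neg]; ring_nf
  have e8 : Real.exp (-β * (x + y)) = (a * a * (b * b))⁻¹ := by
    rw [ha, hb, ← Real.exp_add, ← Real.exp_add, ← Real.exp_add, ← Real.exp_neg]; ring_nf
  have e9 : Real.exp (-β) = (c * c * (c * c))⁻¹ := by
    rw [hc, ← Real.exp_add, ← Real.exp_add, ← Real.exp_neg]; ring_nf
  have e10 : Real.exp (β * (x + y) / 2) = a * b := by
    rw [ha, hb, ← Real.exp_add]; ring_nf
  have e11 : Real.exp (β / 2) = c * c := by
    rw [hc, ← Real.exp_add]; ring_nf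
  have e12 : Real.exp (-(β / 2)) = (c * c)⁻¹ := by
    rw [hc, ← Real.exp_add, ← Real.exp_neg]; ring_nf
  have hDdef : Dfn β x y = (a * a)⁻¹ + (b * b)⁻¹ - (a * a * (b * b))⁻¹ - (c * c * (c * c))⁻¹ := by
    rw [Dfn, e6, e7, e8, e9]
  have ha0 : a ≠ 0 := ne_of_gt pa
  have hb0 : b ≠ 0 := ne_of_gt pb
  have hc0 : c ≠ 0 := ne_of_gt pc
  rw [hDdef] at hDne
  rw [e6, e7, e8, e9, e10, e11, e12, hDdef]
  have hB : (c * (a * b) *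
      ((a * a)⁻¹ + (b * b)⁻¹ - (a * a * (b * b))⁻¹ - (c * c * (c * c))⁻¹) / 2) ^ 2 ≠ 0 :=
    pow_ne_zero 2 (div_ne_zero
      (mul_ne_zero (mul_ne_zero hc0 (mul_ne_zero ha0 hb0)) hDne) two_ne_zero)
  rw [div_eq_div_iff (pow_ne_zero 2 hDne) hB]
  field_simp
  ring
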